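/- arXiv:1403.2284 — 2 statements merged into one kernel-verified Lean document; each statement's English description precedes it below -/
import Mathlib

section
/- Let n ≥ 1, let a > 0, and let f : ℝ → [0,∞] be a measurable function. Let P : ℝⁿ → ℝ be given by P(x) = ∏_{i=1}^n |x_i|, and let X_a = {x ∈ ℝⁿ : there exists i with |x_i| < a}. Then, as an identity in [0,∞] for Lebesgue integrals, ∫_{ℝⁿ \ X_a} f(P(x)) dx = (2ⁿ/(n−1)!) ∫_{aⁿ}^∞ f(p) (log(p/aⁿ))^{n−1} dp. -/
open MeasureTheory Set

lemma lint_abs_region (a : ℝ) (ha : 0 < a) (g : ℝ → ENNReal) :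
    ∫⁻ t in {t : ℝ | a ≤ |t|}, g |t| = 2 * ∫⁻ t in Set.Ioi a, g t := by

  have hset : {t : ℝ | a ≤ |t|} = Iic (-a) ∪ Ici a := by
    ext t; simp [le_abs, le_neg]
    tauto
  have hneg : ∫⁻ t in Iic (-a), g |t| = ∫⁻ t in Ici a, g |t| := by
    have h := (Measure.measurePreserving_neg (volume : Measure ℝ)).setLIntegral_comp_preimage_emb
      (MeasurableEquiv.neg ℝ).measurableEmbedding (fun t => g |t|) (Ici a)
    have hpre : (Neg.neg : ℝ → ℝ) ⁻¹' (Ici a) = Iic (-a) := by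
      ext t; simp [le_neg]
    rw [hpre] at h
    simpa [abs_neg] using h
  have habs : ∫⁻ t in Ici a, g |t| = ∫⁻ t in Ici a, g t := by
    refine setLIntegral_congr_fun measurableSet_Ici ?_
    intro t ht
    show g |t| = g t
    rw [abs_of_nonneg (le_trans ha.le ht)]
  have hIoi : ∫⁻ t in Ici a, g t = ∫⁻ t in Ioi a, g t := by
    rw [Measure.restrict_congr_set Ioi_ae_eq_Ici.symm]
  have hdisj : Disjoint (Iic (-a)) (Ici a) := by
    rw [Set.disjoint_iff]
    rintro t ⟨h1, h2⟩
    simp only [mem_Iic, mem_Ici] at h1 h2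
    linarith
  rw [hset, lintegral_union measurableSet_Ici hdisj, hneg, habs, hIoi, two_mul]

lemma lint_scale (t c : ℝ) (ht : 0 < t) (g : ℝ → ENNReal) :
    ∫⁻ p in Set.Ioi c, g (t * p) = ENNReal.ofReal t⁻¹ * ∫⁻ q in Set.Ioi (t * c), g q := by

  have hemb : MeasurableEmbedding (fun p : ℝ => t * p) :=
    (Homeomorph.mulLeft₀ t ht.ne').toMeasurableEquiv.measurableEmbedding
  have hpre : (fun p : ℝ => t * p) ⁻¹' (Ioi (t * c)) = Ioi c := by
    ext p; simp [mul_lt_mul_iff_right₀ ht]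
  have h1 : ∫⁻ q in Ioi (t * c), g q ∂(Measure.map (fun p : ℝ => t * p) volume)
      = ∫⁻ p in Ioi c, g (t * p) := by
    rw [Measure.restrict_map hemb.measurable measurableSet_Ioi, hpre, hemb.lintegral_map]
  rw [Real.map_volume_mul_left ht.ne'] at h1
  rw [← h1, Measure.restrict_smul, lintegral_smul_measure, abs_of_nonneg (inv_nonneg.2 ht.le), smul_eq_mul]

lemma lint_log (a c : ℝ) (ha : 0 < a) (hac : a < c) (k : ℕ) :
    ∫⁻ t in Set.Ioo a c, ENNReal.ofReal t⁻¹ * ENNReal.ofReal (Real.log (c / t) ^ k)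
      = ENNReal.ofReal (Real.log (c / a) ^ (k + 1) / (k + 1)) := by

  have hc : 0 < c := ha.trans hac
  set φ : ℝ → ℝ := fun t => t⁻¹ * (Real.log c - Real.log t) ^ k with hφ
  have hcont : ContinuousOn φ (Icc a c) := by
    have h0 : ∀ t ∈ Icc a c, t ≠ 0 := fun t ht => (lt_of_lt_of_le ha ht.1).ne'
    exact (ContinuousOn.inv₀ continuousOn_id h0).mul
      (((continuousOn_const.sub (Real.continuousOn_log.mono (fun t ht => h0 t ht))).pow k))
  have hstep1 : ∫⁻ t in Set.Ioo a c, ENNReal.ofReal t⁻¹ * ENNReal.ofReal (Real.log (c / t) ^ k)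
      = ∫⁻ t in Set.Ioo a c, ENNReal.ofReal (φ t) := by
    refine setLIntegral_congr_fun measurableSet_Ioo ?_
    intro t ht
    show ENNReal.ofReal t⁻¹ * ENNReal.ofReal (Real.log (c / t) ^ k) = ENNReal.ofReal (φ t)
    rw [Real.log_div hc.ne' (ha.trans ht.1).ne',
      ← ENNReal.ofReal_mul (inv_nonneg.2 (ha.trans ht.1).le)]
  have hint : IntegrableOn φ (Icc a c) := hcont.integrableOn_Icc
  have hstep2 : ∫⁻ t in Set.Ioo a c, ENNReal.ofReal (φ t) = ENNReal.ofReal (∫ t in Set.Ioo a c, φ t) := by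
    refine (ofReal_integral_eq_lintegral_ofReal (hint.mono_set Ioo_subset_Icc_self) ?_).symm
    filter_upwards [ae_restrict_mem measurableSet_Ioo] with t ht
    exact mul_nonneg (inv_nonneg.2 (ha.trans ht.1).le)
      (pow_nonneg (sub_nonneg.2 (Real.log_le_log (ha.trans ht.1) ht.2.le)) k)
  have hFTC : ∫ t in Set.Ioo a c, φ t = (Real.log c - Real.log a) ^ (k + 1) / (k + 1) := by
    have : ∫ t in Set.Ioo a c, φ t = ∫ t in a..c, φ t := by
      rw [intervalIntegral.integral_of_le hac.le, integral_Ioc_eq_integral_Ioo]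
    rw [this]
    set F : ℝ → ℝ := fun t => -((Real.log c - Real.log t) ^ (k + 1) / (k + 1)) with hF
    have hderiv : ∀ t ∈ uIcc a c, HasDerivAt F (φ t) t := by
      intro t ht
      rw [uIcc_of_le hac.le] at ht
      have ht0 : 0 < t := lt_of_lt_of_le ha ht.1
      have h1 : HasDerivAt (fun t => Real.log c - Real.log t) (0 - t⁻¹) t :=
        (hasDerivAt_const t _).sub (Real.hasDerivAt_log ht0.ne')
      have h2 := ((h1.pow (k + 1)).div_const ((k : ℝ) + 1)).neg
      refine HasDerivAt.congr_deriv h2 ?_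
      have hk : ((k : ℝ) + 1) ≠ 0 := by positivity
      push_cast
      simp only [φ]
      field_simp [hφ]
      ring
    have hii : IntervalIntegrable φ volume a c := by
      rw [intervalIntegrable_iff_integrableOn_Icc_of_le hac.le]
      exact hint
    rw [intervalIntegral.integral_eq_sub_of_hasDerivAt hderiv hii]
    simp [hF, sub_self, zero_pow (Nat.succ_ne_zero k)]
  rw [hstep1, hstep2, hFTC, Real.log_div hc.ne' ha.ne']

/-- Lemma 4 of the paper: for `P(x) = ∏ |x_i|` and `X_a = {x : ∃ i, |x_i| < a}`,
`∫_{ℝⁿ \ X_a} f(P(x)) dx = (2ⁿ/(n-1)!) ∫_{aⁿ}^∞ f(p) (log (p/aⁿ))^{n-1} dp`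
as an identity of Lebesgue integrals in `[0,∞]`. -/
theorem integral_product_complement_slab
    (n : ℕ) (hn : 1 ≤ n) (a : ℝ) (ha : 0 < a)
    (f : ℝ → ENNReal) (hf : Measurable f) :
    ∫⁻ x in {x : Fin n → ℝ | ∀ i, a ≤ |x i|}, f (∏ i, |x i|) =
      (2 ^ n / (Nat.factorial (n - 1) : ENNReal)) *
        ∫⁻ p in Set.Ioi (a ^ n), f p * ENNReal.ofReal (Real.log (p / a ^ n) ^ (n - 1)) := by
  induction n, hn using Nat.le_induction generalizing f hf with
  | base =>
    have e := ((volume_preserving_funUnique (Fin 1) ℝ).symm _)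
    have key := e.setLIntegral_comp_preimage_emb
      (MeasurableEquiv.measurableEmbedding _)
      (fun x : Fin 1 → ℝ => f (∏ i, |x i|)) {x : Fin 1 → ℝ | ∀ i, a ≤ |x i|}
    refine Eq.trans key.symm ?_
    have h1 : ((MeasurableEquiv.funUnique (Fin 1) ℝ).symm ⁻¹' {x : Fin 1 → ℝ | ∀ i, a ≤ |x i|})
        = {t : ℝ | a ≤ |t|} := by
      ext t
      simp [MeasurableEquiv.funUnique, Fin.forall_fin_one]
    rw [h1]
    have h2 : ∀ t : ℝ, f (∏ i : Fin 1, |(MeasurableEquiv.funUnique (Fin 1) ℝ).symm t i|) = f |t| := by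
      intro t
      simp [MeasurableEquiv.funUnique]
    simp only [h2]
    rw [lint_abs_region a ha f]
    simp
  | succ n hn ih =>
    have ha_n : (0:ℝ) < a ^ n := pow_pos ha n
    set C : ENNReal := 2 ^ n / (Nat.factorial (n - 1) : ENNReal) with hC
    have hC_top : C ≠ ⊤ := (ENNReal.div_lt_top (by simp) (by
      simp [Nat.factorial_ne_zero])).ne
    -- Step 1: split off the first coordinate
    have e := ((volume_preserving_piFinSuccAbove (fun _ : Fin (n+1) => ℝ) 0).symm _)
    have key := e.setLIntegral_comp_preimage_emb (MeasurableEquiv.measurableEmbedding _)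
        (fun x : Fin (n+1) → ℝ => f (∏ i, |x i|)) {x : Fin (n+1) → ℝ | ∀ i, a ≤ |x i|}
    rw [← key]
    have hsymm : ∀ p : ℝ × (Fin n → ℝ),
        (MeasurableEquiv.piFinSuccAbove (fun _ : Fin (n+1) => ℝ) 0).symm p = Fin.cons p.1 p.2 := by
      intro p
      simp [MeasurableEquiv.piFinSuccAbove, Fin.insertNthEquiv_zero, Fin.consEquiv]
    have hpre : (MeasurableEquiv.piFinSuccAbove (fun _ : Fin (n+1) => ℝ) 0).symm ⁻¹'
        {x : Fin (n+1) → ℝ | ∀ i, a ≤ |x i|}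
        = {t : ℝ | a ≤ |t|} ×ˢ {y : Fin n → ℝ | ∀ i, a ≤ |y i|} := by
      ext p
      simp [hsymm, Fin.forall_fin_succ]
    have hinteg : ∀ p : ℝ × (Fin n → ℝ),
        f (∏ i, |(MeasurableEquiv.piFinSuccAbove (fun _ : Fin (n+1) => ℝ) 0).symm p i|)
          = f (|p.1| * ∏ j, |p.2 j|) := by
      intro p
      rw [hsymm, Fin.prod_univ_succ]
      simp
    simp only [hinteg]
    rw [hpre]
    -- Step 2: Fubini on the product
    have hprod : ∫⁻ p in ({t : ℝ | a ≤ |t|} ×ˢ {y : Fin n → ℝ | ∀ i, a ≤ |y i|}),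
        f (|p.1| * ∏ j, |p.2 j|) ∂(volume : Measure (ℝ × (Fin n → ℝ)))
        = ∫⁻ t in {t : ℝ | a ≤ |t|}, ∫⁻ y in {y : Fin n → ℝ | ∀ i, a ≤ |y i|},
            f (|t| * ∏ j, |y j|) := by
      rw [Measure.volume_eq_prod, ← Measure.prod_restrict]
      refine lintegral_prod _ ?_
      apply Measurable.aemeasurable
      exact hf.comp ((measurable_fst.abs).mul
        (Finset.measurable_prod _ fun j _ => ((measurable_pi_apply j).comp measurable_snd).abs))
    rw [hprod]
    -- Step 3: apply the induction hypothesis in the inner integral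
    have h3 : ∀ t : ℝ, ∫⁻ y in {y : Fin n → ℝ | ∀ i, a ≤ |y i|}, f (|t| * ∏ j, |y j|)
        = C * ∫⁻ p in Set.Ioi (a ^ n), f (|t| * p) * ENNReal.ofReal (Real.log (p / a ^ n) ^ (n - 1)) :=
      fun t => ih _ (hf.comp (measurable_const_mul |t|))
    rw [lintegral_congr h3, lintegral_const_mul' _ _ hC_top]
    -- Step 4: get rid of absolute values in outer integral
    rw [lint_abs_region a ha (fun u => ∫⁻ p in Set.Ioi (a ^ n),
      f (u * p) * ENNReal.ofReal (Real.log (p / a ^ n) ^ (n - 1)))]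
    -- Step 5: scaling substitution in inner integral
    have h5 : ∀ t ∈ Set.Ioi a, (∫⁻ p in Set.Ioi (a ^ n),
        f (t * p) * ENNReal.ofReal (Real.log (p / a ^ n) ^ (n - 1)))
        = ENNReal.ofReal t⁻¹ * ∫⁻ q in Set.Ioi (t * a ^ n),
            f q * ENNReal.ofReal (Real.log (q / (t * a ^ n)) ^ (n - 1)) := by
      intro t ht
      have ht0 : (0:ℝ) < t := ha.trans ht
      rw [← lint_scale t (a ^ n) ht0
        (fun q => f q * ENNReal.ofReal (Real.log (q / (t * a ^ n)) ^ (n - 1)))]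
      refine lintegral_congr fun p => ?_
      rw [mul_div_mul_left p (a ^ n) ht0.ne']
    rw [setLIntegral_congr_fun measurableSet_Ioi h5]
    -- Step 6: Tonelli swap via indicator functions
    set G : ℝ × ℝ → ENNReal := fun z =>
      Set.indicator {z : ℝ × ℝ | a < z.1 ∧ z.1 * a ^ n < z.2}
        (fun z => ENNReal.ofReal z.1⁻¹ *
          (f z.2 * ENNReal.ofReal (Real.log (z.2 / (z.1 * a ^ n)) ^ (n - 1)))) z with hG
    have hGmeas : Measurable G := by
      apply Measurable.indicator
      · exact (measurable_fst.inv.ennreal_ofReal).mul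
          ((hf.comp measurable_snd).mul
            ((Real.measurable_log.comp (measurable_snd.div (measurable_fst.mul_const _))).pow_const
              _).ennreal_ofReal)
      · exact (measurableSet_lt measurable_const measurable_fst).inter
          (measurableSet_lt (measurable_fst.mul_const _) measurable_snd)
    have h6 : ∫⁻ t in Set.Ioi a, ENNReal.ofReal t⁻¹ * ∫⁻ q in Set.Ioi (t * a ^ n),
        f q * ENNReal.ofReal (Real.log (q / (t * a ^ n)) ^ (n - 1))
        = ∫⁻ t, ∫⁻ q, G (t, q) := by
      rw [← lintegral_indicator measurableSet_Ioi]
      refine lintegral_congr fun t => ?_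
      by_cases ht : a < t
      · rw [Set.indicator_of_mem (Set.mem_Ioi.2 ht)]
        rw [← lintegral_indicator measurableSet_Ioi, ← lintegral_const_mul' _ _ ENNReal.ofReal_ne_top]
        refine lintegral_congr fun q => ?_
        simp only [hG]
        by_cases hq : t * a ^ n < q
        · rw [Set.indicator_of_mem (Set.mem_Ioi.2 hq),
            Set.indicator_of_mem (show (t, q) ∈ {z : ℝ × ℝ | a < z.1 ∧ z.1 * a ^ n < z.2} from ⟨ht, hq⟩)]
        · rw [Set.indicator_of_notMem (fun h => hq (Set.mem_Ioi.1 h)),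
            Set.indicator_of_notMem (show (t, q) ∉ {z : ℝ × ℝ | a < z.1 ∧ z.1 * a ^ n < z.2} from
              fun h => hq h.2), mul_zero]
      · rw [Set.indicator_of_notMem (fun h => ht (Set.mem_Ioi.1 h))]
        symm
        simp only [hG]
        rw [← lintegral_zero]
        refine lintegral_congr fun q => ?_
        exact Set.indicator_of_notMem (fun h => ht h.1) _
    rw [h6, lintegral_lintegral_swap hGmeas.aemeasurable]
    -- Step 7: compute the inner integral over t
    have h7 : ∀ q : ℝ, ∫⁻ t, G (t, q)
        = Set.indicator (Set.Ioi (a ^ (n+1)))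
            (fun q => f q * ENNReal.ofReal (Real.log (q / a ^ (n+1)) ^ n / n)) q := by
      intro q
      have hGt : ∀ t : ℝ, G (t, q) = Set.indicator (Set.Ioo a (q / a ^ n))
          (fun t => f q * (ENNReal.ofReal t⁻¹ *
            ENNReal.ofReal (Real.log ((q / a ^ n) / t) ^ (n - 1)))) t := by
        intro t
        simp only [hG]
        by_cases h : a < t ∧ a ^ n * t < q
        · rw [Set.indicator_of_mem (show (t, q) ∈ {z : ℝ × ℝ | a < z.1 ∧ z.1 * a ^ n < z.2} from
              ⟨h.1, by rw [mul_comm]; exact h.2⟩),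
            Set.indicator_of_mem (show t ∈ Set.Ioo a (q / a ^ n) from
              ⟨h.1, (lt_div_iff₀ ha_n).2 (by rw [mul_comm] at h; exact h.2)⟩)]
          rw [div_div, mul_comm (a ^ n) t]
          ring
        · rw [Set.indicator_of_notMem (show (t, q) ∉ {z : ℝ × ℝ | a < z.1 ∧ z.1 * a ^ n < z.2} from
            fun hm => h ⟨hm.1, by rw [mul_comm]; exact hm.2⟩),
            Set.indicator_of_notMem (show t ∉ Set.Ioo a (q / a ^ n) from fun hm =>
              h ⟨hm.1, by rw [mul_comm]; exact (lt_div_iff₀ ha_n).1 hm.2⟩)]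
      simp only [hGt]
      rw [lintegral_indicator measurableSet_Ioo]
      have hmeas : Measurable (fun t : ℝ => ENNReal.ofReal t⁻¹ *
          ENNReal.ofReal (Real.log (q / a ^ n / t) ^ (n - 1))) :=
        (measurable_inv.ennreal_ofReal).mul
          (((Real.measurable_log.comp (measurable_const.div measurable_id)).pow_const _).ennreal_ofReal)
      rw [lintegral_const_mul (f q) hmeas]
      by_cases hq : a ^ (n+1) < q
      · have hac : a < q / a ^ n := (lt_div_iff₀ ha_n).2 (by
          rw [← pow_succ']; exact hq)
        have hcast : ((n - 1 : ℕ) : ℝ) + 1 = (n : ℝ) := by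
          exact_mod_cast congrArg (Nat.cast : ℕ → ℝ) (Nat.sub_add_cancel hn)
        rw [lint_log a (q / a ^ n) ha hac (n - 1), Nat.sub_add_cancel hn, hcast,
          div_div, ← pow_succ, Set.indicator_of_mem (Set.mem_Ioi.2 hq)]
      · have : Set.Ioo a (q / a ^ n) = ∅ := Set.Ioo_eq_empty (fun hac => hq (by
          rw [lt_div_iff₀ ha_n] at hac
          rw [pow_succ']
          exact hac))
        rw [this, Measure.restrict_empty, lintegral_zero_measure, mul_zero,
          Set.indicator_of_notMem (fun h => hq (Set.mem_Ioi.1 h))]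
    rw [lintegral_congr h7, lintegral_indicator measurableSet_Ioi]
    -- Step 8: final arithmetic
    have h8 : ∫⁻ q in Set.Ioi (a ^ (n+1)),
        f q * ENNReal.ofReal (Real.log (q / a ^ (n+1)) ^ n / n)
        = (∫⁻ q in Set.Ioi (a ^ (n+1)),
            f q * ENNReal.ofReal (Real.log (q / a ^ (n+1)) ^ n)) * ENNReal.ofReal ((n:ℝ)⁻¹) := by
      rw [← lintegral_mul_const' _ _ ENNReal.ofReal_ne_top]
      refine setLIntegral_congr_fun measurableSet_Ioi ?_
      intro q hq
      beta_reduce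
      have h1q : (1:ℝ) < q / a ^ (n+1) := (one_lt_div (pow_pos ha (n+1))).2 hq
      rw [div_eq_mul_inv, ENNReal.ofReal_mul (pow_nonneg (Real.log_nonneg h1q.le) n), mul_assoc]
    rw [h8]
    have hofr : ENNReal.ofReal ((n:ℝ)⁻¹) = ((n:ENNReal))⁻¹ := by
      rw [ENNReal.ofReal_inv_of_pos (by exact_mod_cast hn), ENNReal.ofReal_natCast]
    rw [hofr]
    have hconst : C * 2 * ((n:ENNReal))⁻¹ = 2 ^ (n+1) / ((n+1-1).factorial : ENNReal) := by
      rw [Nat.add_sub_cancel, hC]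
      have hfac : (n.factorial : ENNReal) = (n : ENNReal) * ((n-1).factorial : ENNReal) := by
        rw [← Nat.cast_mul, Nat.mul_factorial_pred (by omega)]
      rw [div_eq_mul_inv, div_eq_mul_inv, hfac,
        ENNReal.mul_inv (Or.inl (Nat.cast_ne_zero.2 (by omega))) (Or.inl (ENNReal.natCast_ne_top n)),
        pow_succ]
      ring
    rw [← hconst]
    simp only [Nat.add_sub_cancel]
    ring
end

section
/- Let (λ_j)_{j∈ℕ} be a sequence of positive real numbers such that ∑_j exp(−t λ_j) < ∞ for every t > 0, let N(E) = #{j : λ_j ≤ E}, and suppose that for some l > 0 and c ≥ 0 one has lim_{E→∞} E^{−l} N(E) = c. Then lim_{t→0⁺} t^{l+1} ∑_j λ_j·exp(−t λ_j) = c·l·Γ(l+1), where Γ is the Gamma function. -/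
open Filter MeasureTheory Set Real

noncomputable def htdaN (lam : ℕ → ℝ) (E : ℝ) : ℝ := Nat.card {j | lam j ≤ E}



lemma htda_tendsto_atTop {lam : ℕ → ℝ}
    (hsum : ∀ t : ℝ, 0 < t → Summable fun j => Real.exp (-t * lam j)) :
    Tendsto lam atTop atTop := by
  have h0 : Tendsto (fun j => Real.exp (-1 * lam j)) atTop (nhds 0) :=
    (hsum 1 one_pos).tendsto_atTop_zero
  have h1 := Real.tendsto_exp_comp_nhds_zero.mp h0
  have h2 : Tendsto (fun j => -(-1 * lam j)) atTop atTop := tendsto_neg_atBot_atTop.comp h1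
  simpa using h2

lemma htda_finite {lam : ℕ → ℝ}
    (hsum : ∀ t : ℝ, 0 < t → Summable fun j => Real.exp (-t * lam j)) (E : ℝ) :
    {j | lam j ≤ E}.Finite := by
  have h := (htda_tendsto_atTop hsum).eventually (eventually_gt_atTop E)
  rw [← Nat.cofinite_eq_atTop, eventually_cofinite] at h
  refine h.subset fun j hj => ?_
  simpa using not_lt.mpr hj

lemma htda_mono {lam : ℕ → ℝ}
    (hsum : ∀ t : ℝ, 0 < t → Summable fun j => Real.exp (-t * lam j)) :
    Monotone (htdaN lam) := by
  intro E F hEF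
  unfold htdaN
  rw [Nat.card_coe_set_eq, Nat.card_coe_set_eq]
  exact_mod_cast Set.ncard_le_ncard (fun j hj => le_trans hj hEF) (htda_finite hsum F)

lemma htda_nonneg (lam : ℕ → ℝ) (E : ℝ) : 0 ≤ htdaN lam E := Nat.cast_nonneg _

lemma htda_measurable {lam : ℕ → ℝ}
    (hsum : ∀ t : ℝ, 0 < t → Summable fun j => Real.exp (-t * lam j)) :
    Measurable (htdaN lam) := (htda_mono hsum).measurable

lemma htda_zero {lam : ℕ → ℝ} (hlam : ∀ j, 0 < lam j)
    (hsum : ∀ t : ℝ, 0 < t → Summable fun j => Real.exp (-t * lam j)) :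
    ∃ a, 0 < a ∧ a ≤ 1 ∧ ∀ E, E < a → htdaN lam E = 0 := by
  rcases Set.eq_empty_or_nonempty {j | lam j ≤ 1} with h | h
  · refine ⟨1, one_pos, le_rfl, fun E hE => ?_⟩
    unfold htdaN
    have he : {j | lam j ≤ E} = ∅ := by
      rw [Set.eq_empty_iff_forall_notMem] at h ⊢
      exact fun j hj => h j (le_trans hj (le_of_lt hE))
    simp [he]
  · obtain ⟨j0, hj0, hmin⟩ := Set.exists_min_image _ lam (htda_finite hsum 1) h
    refine ⟨lam j0, hlam j0, hj0, fun E hE => ?_⟩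
    unfold htdaN
    have he : {j | lam j ≤ E} = ∅ := by
      rw [Set.eq_empty_iff_forall_notMem]
      intro j hj
      have h1 : j ∈ {j | lam j ≤ 1} := le_trans hj (le_trans hE.le hj0)
      exact absurd (le_trans (hmin j h1) hj) (not_le.mpr hE)
    simp [he]


-- integrability of x^s e^{-bx} on Ioi 0
lemma htda_integrable_rpow_exp {s b : ℝ} (hs : -1 < s) (hb : 0 < b) :
    IntegrableOn (fun x : ℝ => x ^ s * Real.exp (-b * x)) (Ioi 0) := by
  have h := integrableOn_rpow_mul_exp_neg_mul_rpow hs one_pos hb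
  refine h.congr_fun (fun x hx => ?_) measurableSet_Ioi
  beta_reduce
  rw [Real.rpow_one]

lemma htda_integrableOn_exp {t : ℝ} (ht : 0 < t) (a : ℝ) :
    IntegrableOn (fun E : ℝ => Real.exp (-t * E)) (Ioi a) :=
  exp_neg_integrableOn_Ioi a ht

lemma htda_integrableOn_id_exp {t : ℝ} (ht : 0 < t) {a : ℝ} (ha : 0 ≤ a) :
    IntegrableOn (fun E : ℝ => E * Real.exp (-t * E)) (Ioi a) := by
  have h := (htda_integrable_rpow_exp (by norm_num : (-1:ℝ) < 1) ht).mono_set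
    (Ioi_subset_Ioi ha)
  refine h.congr_fun (fun x hx => ?_) measurableSet_Ioi
  beta_reduce
  rw [Real.rpow_one]

lemma htda_int0 {t : ℝ} (ht : 0 < t) (a : ℝ) :
    ∫ E in Ioi a, Real.exp (-t * E) = Real.exp (-t * a) / t := by
  have hderiv : ∀ x ∈ Ici a, HasDerivAt (fun E => -Real.exp (-t * E) / t)
      (Real.exp (-t * x)) x := by
    intro x _
    have h1 : HasDerivAt (fun E : ℝ => -t * E) (-t) x := by
      simpa using (hasDerivAt_id x).const_mul (-t)
    have h2 := (h1.exp).neg.div_const t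
    refine h2.congr_deriv ?_
    have htne : t ≠ 0 := ne_of_gt ht
    field_simp
  have htend : Tendsto (fun E => -Real.exp (-t * E) / t) atTop (nhds 0) := by
    have : Tendsto (fun E : ℝ => Real.exp (-t * E)) atTop (nhds 0) := by
      simpa using tendsto_rpow_mul_exp_neg_mul_atTop_nhds_zero 0 t ht
    simpa using (this.neg).div_const t
  have := integral_Ioi_of_hasDerivAt_of_tendsto' hderiv (htda_integrableOn_exp ht a) htend
  rw [this]; ring

lemma htda_int1 {t : ℝ} (ht : 0 < t) {a : ℝ} (ha : 0 ≤ a) :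
    ∫ E in Ioi a, E * Real.exp (-t * E) = (a / t + 1 / t ^ 2) * Real.exp (-t * a) := by
  have hderiv : ∀ x ∈ Ici a, HasDerivAt (fun E => -((E / t + 1 / t ^ 2) * Real.exp (-t * E)))
      (x * Real.exp (-t * x)) x := by
    intro x _
    have h1 : HasDerivAt (fun E : ℝ => -t * E) (-t) x := by
      simpa using (hasDerivAt_id x).const_mul (-t)
    have h2 : HasDerivAt (fun E : ℝ => E / t + 1 / t ^ 2) (1 / t) x := by
      simp only [one_div]
      simpa using ((hasDerivAt_id x).div_const t).add_const ((t ^ 2)⁻¹)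
    have h3 := ((h2.mul h1.exp)).neg
    refine h3.congr_deriv ?_
    have htne : t ≠ 0 := ne_of_gt ht
    field_simp
    ring
  have htend : Tendsto (fun E => -((E / t + 1 / t ^ 2) * Real.exp (-t * E))) atTop (nhds 0) := by
    have h1 : Tendsto (fun E : ℝ => E ^ (1:ℝ) * Real.exp (-t * E)) atTop (nhds 0) :=
      tendsto_rpow_mul_exp_neg_mul_atTop_nhds_zero 1 t ht
    have h0 : Tendsto (fun E : ℝ => Real.exp (-t * E)) atTop (nhds 0) := by
      simpa using tendsto_rpow_mul_exp_neg_mul_atTop_nhds_zero 0 t ht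
    have h1' : Tendsto (fun E : ℝ => E * Real.exp (-t * E)) atTop (nhds 0) := by
      refine h1.congr' ?_
      filter_upwards [eventually_gt_atTop 0] with x hx
      rw [Real.rpow_one]
    have := ((h1'.div_const t).add (h0.const_mul (1 / t ^ 2))).neg
    simp only [zero_div, mul_zero, add_zero, neg_zero, zero_add] at this
    refine this.congr (fun x => ?_)
    ring
  have := integral_Ioi_of_hasDerivAt_of_tendsto' hderiv (htda_integrableOn_id_exp ht ha) htend
  rw [this]; ring




lemma htda_swap {lam : ℕ → ℝ} (hlam : ∀ j, 0 < lam j)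
    (hsum : ∀ t : ℝ, 0 < t → Summable fun j => Real.exp (-t * lam j))
    {g : ℝ → ℝ} (hgnn : ∀ x, 0 < x → 0 ≤ g x)
    (hgint : ∀ a : ℝ, 0 < a → IntegrableOn g (Ioi a))
    (hsum2 : Summable fun j => ∫ E in Ioi (lam j), g E) :
    ∫ E in Ioi 0, htdaN lam E * g E = ∑' j, ∫ E in Ioi (lam j), g E := by
  set μ := (volume : Measure ℝ).restrict (Ioi 0) with hμ
  set F : ℕ → ℝ → ℝ := fun j => (Ici (lam j)).indicator g with hF
  have hicieq : ∀ j, Ici (lam j) ∩ Ioi (0:ℝ) = Ici (lam j) := by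
    intro j
    refine Set.inter_eq_self_of_subset_left (fun x hx => lt_of_lt_of_le (hlam j) hx)
  have hrestrict : ∀ j, μ.restrict (Ici (lam j)) = (volume : Measure ℝ).restrict (Ici (lam j)) := by
    intro j
    rw [hμ, Measure.restrict_restrict measurableSet_Ici, hicieq j]
  have hFint : ∀ j, Integrable (F j) μ := by
    intro j
    rw [hF, integrable_indicator_iff measurableSet_Ici]
    show IntegrableOn g (Ici (lam j)) μ
    unfold IntegrableOn
    rw [hrestrict j]
    exact Iff.mpr integrableOn_Ici_iff_integrableOn_Ioi (hgint (lam j) (hlam j))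
  have hFI : ∀ j, ∫ a, F j a ∂μ = ∫ E in Ioi (lam j), g E := by
    intro j
    rw [hF, integral_indicator measurableSet_Ici]
    show ∫ a in Ici (lam j), g a ∂μ = _
    rw [hrestrict j]
    exact integral_Ici_eq_integral_Ioi
  have hFnorm : ∀ j, ∫ a, ‖F j a‖ ∂μ = ∫ E in Ioi (lam j), g E := by
    intro j
    rw [← hFI j]
    refine integral_congr_ae (Eventually.of_forall fun a => ?_)
    show ‖F j a‖ = F j a
    by_cases hmem : a ∈ Ici (lam j)
    · rw [hF]
      simp only [Set.indicator_of_mem hmem]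
      exact Real.norm_of_nonneg (hgnn a (lt_of_lt_of_le (hlam j) hmem))
    · rw [hF]
      simp only [Set.indicator_of_notMem hmem, norm_zero]
  have hFsum : Summable fun j => ∫ a, ‖F j a‖ ∂μ := by
    refine hsum2.congr fun j => (hFnorm j).symm
  have hpt : ∀ E : ℝ, ∑' j, F j E = htdaN lam E * g E := by
    intro E
    have hfin := htda_finite hsum E
    have h1 : ∑' j, F j E = ∑ j ∈ hfin.toFinset, F j E := by
      refine tsum_eq_sum fun j hj => ?_
      rw [hF]
      exact Set.indicator_of_notMem (show E ∉ Ici (lam j) from fun h => hj (hfin.mem_toFinset.mpr h)) g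
    rw [h1]
    have h2 : ∀ j ∈ hfin.toFinset, F j E = g E := fun j hj =>
      Set.indicator_of_mem (show E ∈ Ici (lam j) from hfin.mem_toFinset.mp hj) g
    rw [Finset.sum_congr rfl h2, Finset.sum_const, nsmul_eq_mul]
    congr 1
    unfold htdaN
    rw [Nat.card_coe_set_eq, Set.ncard_eq_toFinset_card _ hfin]
  calc ∫ E in Ioi (0:ℝ), htdaN lam E * g E
      = ∫ a, ∑' j, F j a ∂μ := integral_congr_ae (Eventually.of_forall fun E => (hpt E).symm)
    _ = ∑' j, ∫ a, F j a ∂μ := (integral_tsum_of_summable_integral_norm hFint hFsum).symm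
    _ = ∑' j, ∫ E in Ioi (lam j), g E := tsum_congr hFI




lemma htda_bound {lam : ℕ → ℝ} {l c : ℝ} (hl : 0 < l) (hlam : ∀ j, 0 < lam j) (hc : 0 ≤ c)
    (hsum : ∀ t : ℝ, 0 < t → Summable fun j => Real.exp (-t * lam j))
    (hN : Tendsto (fun E : ℝ => E ^ (-l) * htdaN lam E) atTop (nhds c)) :
    ∃ M, 0 ≤ M ∧ ∀ E : ℝ, 0 < E → E ^ (-l) * htdaN lam E ≤ M := by
  obtain ⟨a, ha0, ha1, haz⟩ := htda_zero hlam hsum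
  obtain ⟨E₀, hE₀⟩ := eventually_atTop.mp (hN.eventually (eventually_le_nhds (lt_add_one c)))
  set E₁ := max E₀ 1 with hE₁
  refine ⟨max (c + 1) (a ^ (-l) * htdaN lam E₁), le_max_iff.mpr (Or.inl (by linarith)),
    fun E hE => ?_⟩
  rcases lt_or_ge E a with h | h
  · rw [haz E h, mul_zero]
    exact le_max_iff.mpr (Or.inl (by linarith))
  rcases le_or_gt E₁ E with h1 | h1
  · exact le_max_iff.mpr (Or.inl (hE₀ E (le_trans (le_max_left _ _) h1)))
  · refine le_max_iff.mpr (Or.inr ?_)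
    have hle1 : E ^ (-l) ≤ a ^ (-l) :=
      Real.rpow_le_rpow_of_nonpos ha0 h (neg_nonpos.mpr hl.le)
    exact mul_le_mul hle1 (htda_mono hsum h1.le) (htda_nonneg lam E) (by positivity)


lemma htda_limit {lam : ℕ → ℝ} {l c : ℝ} (hl : 0 < l) (hc : 0 ≤ c)
    (hlam : ∀ j, 0 < lam j)
    (hsum : ∀ t : ℝ, 0 < t → Summable fun j => Real.exp (-t * lam j))
    (hN : Tendsto (fun E : ℝ => E ^ (-l) * htdaN lam E) atTop (nhds c))
    (k : ℝ) (hk : 0 ≤ k) :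
    Tendsto (fun t : ℝ => t ^ (l + k + 1) * ∫ E in Ioi 0, htdaN lam E * (E ^ k * Real.exp (-t * E)))
      (nhdsWithin 0 (Ioi 0)) (nhds (c * Real.Gamma (l + k + 1))) := by
  obtain ⟨M, hM0, hM⟩ := htda_bound hl hlam hc hsum hN
  -- the rescaled integrand
  set F : ℝ → ℝ → ℝ := fun t u => t ^ (l + k) * (htdaN lam (u / t) * ((u / t) ^ k * Real.exp (-u)))
    with hFdef
  have hptw : ∀ t u : ℝ, 0 < t → 0 < u →
      F t u = ((u / t) ^ (-l) * htdaN lam (u / t)) * (u ^ (l + k) * Real.exp (-u)) := by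
    intro t u ht hu
    have hut : 0 < u / t := div_pos hu ht
    rw [hFdef]
    simp only
    rw [Real.div_rpow hu.le ht.le, Real.div_rpow hu.le ht.le, Real.rpow_neg hu.le,
      Real.rpow_neg ht.le, Real.rpow_add ht, Real.rpow_add hu]
    have h1 : (0:ℝ) < t ^ l := Real.rpow_pos_of_pos ht l
    have h2 : (0:ℝ) < u ^ l := Real.rpow_pos_of_pos hu l
    have h3 : (0:ℝ) < t ^ k := Real.rpow_pos_of_pos ht k
    field_simp
  -- pointwise limit
  have hdivtend : ∀ u : ℝ, 0 < u →
      Tendsto (fun t : ℝ => u / t) (nhdsWithin 0 (Ioi 0)) atTop := by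
    intro u hu
    have := Tendsto.const_mul_atTop hu tendsto_inv_nhdsGT_zero
    simpa [div_eq_mul_inv] using this
  have hlim : ∀ u : ℝ, 0 < u →
      Tendsto (fun t : ℝ => F t u) (nhdsWithin 0 (Ioi 0))
        (nhds (c * (u ^ (l + k) * Real.exp (-u)))) := by
    intro u hu
    have h1 : Tendsto (fun t : ℝ => (u / t) ^ (-l) * htdaN lam (u / t))
        (nhdsWithin 0 (Ioi 0)) (nhds c) := hN.comp (hdivtend u hu)
    have h2 := h1.mul_const (u ^ (l + k) * Real.exp (-u))
    refine Tendsto.congr' ?_ h2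
    filter_upwards [self_mem_nhdsWithin] with t ht
    exact (hptw t u ht hu).symm
  -- DCT
  have hDCT : Tendsto (fun t : ℝ => ∫ u in Ioi 0, F t u)
      (nhdsWithin 0 (Ioi 0)) (nhds (∫ u in Ioi 0, c * (u ^ (l + k) * Real.exp (-u)))) := by
    refine tendsto_integral_filter_of_dominated_convergence
      (fun u => M * (u ^ (l + k) * Real.exp (-u))) ?_ ?_ ?_ ?_
    · filter_upwards [self_mem_nhdsWithin] with t ht
      have hmeas : Measurable (F t) := by
        have h1 : Measurable fun u : ℝ => htdaN lam (u / t) :=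
          (htda_measurable hsum).comp (measurable_id.div_const t)
        have h2 : Measurable fun u : ℝ => (u / t) ^ k :=
          (Real.continuous_rpow_const hk).measurable.comp (measurable_id.div_const t)
        exact measurable_const.mul (h1.mul (h2.mul (Real.measurable_exp.comp measurable_neg)))
      exact hmeas.aestronglyMeasurable
    · filter_upwards [self_mem_nhdsWithin] with t ht
      refine (ae_restrict_iff' measurableSet_Ioi).mpr (Eventually.of_forall fun u hu => ?_)
      have hut : 0 < u / t := div_pos hu ht
      rw [Real.norm_of_nonneg ?nn, hptw t u ht hu]
      case nn =>
        rw [hFdef]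
        exact mul_nonneg (Real.rpow_nonneg (le_of_lt ht) _) (mul_nonneg (htda_nonneg lam _)
          (mul_nonneg (Real.rpow_nonneg hut.le _) (Real.exp_nonneg _)))
      exact mul_le_mul_of_nonneg_right (hM _ hut)
        (mul_nonneg (Real.rpow_nonneg (le_of_lt hu) _) (Real.exp_nonneg _))
    · have h := (htda_integrable_rpow_exp (show (-1:ℝ) < l + k by linarith) one_pos).congr_fun
        (fun x _ => by beta_reduce; rw [neg_one_mul]) measurableSet_Ioi
      exact h.const_mul M
    · refine (ae_restrict_iff' measurableSet_Ioi).mpr (Eventually.of_forall fun u hu => hlim u hu)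
  have hL : ∫ u in Ioi (0:ℝ), c * (u ^ (l + k) * Real.exp (-u)) = c * Real.Gamma (l + k + 1) := by
    rw [integral_const_mul]
    congr 1
    rw [Real.Gamma_eq_integral (by linarith : (0:ℝ) < l + k + 1)]
    refine setIntegral_congr_fun measurableSet_Ioi fun x hx => ?_
    rw [show l + k + 1 - 1 = l + k by ring]
    ring
  have heq : ∀ t : ℝ, t ∈ Ioi (0:ℝ) →
      t ^ (l + k + 1) * ∫ E in Ioi 0, htdaN lam E * (E ^ k * Real.exp (-t * E))
        = ∫ u in Ioi 0, F t u := by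
    intro t ht
    have hcv := integral_comp_mul_left_Ioi
      (fun u => htdaN lam (u / t) * ((u / t) ^ k * Real.exp (-u))) 0 (show (0:ℝ) < t from ht)
    simp only [mul_zero, smul_eq_mul] at hcv
    calc t ^ (l + k + 1) * ∫ E in Ioi 0, htdaN lam E * (E ^ k * Real.exp (-t * E))
        = t ^ (l + k + 1) * ∫ E in Ioi 0,
            (fun u => htdaN lam (u / t) * ((u / t) ^ k * Real.exp (-u))) (t * E) := by
          congr 1
          refine setIntegral_congr_fun measurableSet_Ioi fun x hx => ?_
          simp only
          rw [mul_div_cancel_left₀ _ (show (t:ℝ) ≠ 0 from ne_of_gt ht), neg_mul]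
      _ = t ^ (l + k + 1) * (t⁻¹ * ∫ u in Ioi 0,
            htdaN lam (u / t) * ((u / t) ^ k * Real.exp (-u))) := by rw [hcv]
      _ = ∫ u in Ioi 0, F t u := by
          rw [hFdef]
          simp only
          rw [integral_const_mul, Real.rpow_add (show (0:ℝ) < t from ht),
            Real.rpow_one]
          have htne : (t:ℝ) ≠ 0 := ne_of_gt ht
          field_simp
  rw [← hL]
  refine Tendsto.congr' ?_ hDCT
  filter_upwards [self_mem_nhdsWithin] with t ht
  exact (heq t ht).symm




lemma htda_summable_mul {lam : ℕ → ℝ}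
    (hsum : ∀ t : ℝ, 0 < t → Summable fun j => Real.exp (-t * lam j))
    {t : ℝ} (ht : 0 < t) (hlam : ∀ j, 0 < lam j) :
    Summable fun j => lam j * Real.exp (-t * lam j) := by
  have h2 := (hsum (t / 2) (half_pos ht)).mul_left (2 / t)
  refine Summable.of_nonneg_of_le
    (fun j => mul_nonneg (hlam j).le (Real.exp_nonneg _)) (fun j => ?_) h2
  have hb : lam j ≤ (2 / t) * Real.exp (t / 2 * lam j) := by
    have h1 : t / 2 * lam j ≤ Real.exp (t / 2 * lam j) := by
      have := Real.add_one_le_exp (t / 2 * lam j)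
      nlinarith [mul_pos (half_pos ht) (hlam j)]
    calc lam j = (2 / t) * (t / 2 * lam j) := by field_simp
      _ ≤ (2 / t) * Real.exp (t / 2 * lam j) := by
          exact mul_le_mul_of_nonneg_left h1 (by positivity)
  calc lam j * Real.exp (-t * lam j)
      ≤ (2 / t) * Real.exp (t / 2 * lam j) * Real.exp (-t * lam j) :=
        mul_le_mul_of_nonneg_right hb (Real.exp_nonneg _)
    _ = 2 / t * Real.exp (-(t / 2) * lam j) := by
        rw [mul_assoc, ← Real.exp_add]
        ring_nf

lemma htda_identity {lam : ℕ → ℝ} (hlam : ∀ j, 0 < lam j)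
    (hsum : ∀ t : ℝ, 0 < t → Summable fun j => Real.exp (-t * lam j))
    {t : ℝ} (ht : 0 < t) :
    ∑' j, lam j * Real.exp (-t * lam j)
      = t * (∫ E in Ioi 0, htdaN lam E * (E * Real.exp (-t * E)))
        - ∫ E in Ioi 0, htdaN lam E * Real.exp (-t * E) := by
  have hA := htda_summable_mul hsum ht hlam
  have hB := hsum t ht
  have hI0 : ∫ E in Ioi 0, htdaN lam E * Real.exp (-t * E)
      = (1 / t) * ∑' j, Real.exp (-t * lam j) := by
    rw [htda_swap hlam hsum (g := fun E => Real.exp (-t * E))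
      (fun x _ => (Real.exp_nonneg _)) (fun a _ => htda_integrableOn_exp ht a) ?_]
    · rw [tsum_congr (fun j => htda_int0 ht (lam j)), tsum_div_const]
      ring
    · refine (hB.div_const t).congr fun j => (htda_int0 ht (lam j)).symm
  have hI1 : ∫ E in Ioi 0, htdaN lam E * (E * Real.exp (-t * E))
      = (1 / t) * ∑' j, lam j * Real.exp (-t * lam j)
        + (1 / t ^ 2) * ∑' j, Real.exp (-t * lam j) := by
    rw [htda_swap hlam hsum (g := fun E => E * Real.exp (-t * E))
      (fun x hx => mul_nonneg hx.le (Real.exp_nonneg _))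
      (fun a ha => htda_integrableOn_id_exp ht ha.le) ?_]
    · rw [tsum_congr (fun j => htda_int1 ht (hlam j).le)]
      have hs1 : Summable fun j => lam j * Real.exp (-t * lam j) / t := hA.div_const t
      have hs2 : Summable fun j => 1 / t ^ 2 * Real.exp (-t * lam j) := hB.mul_left _
      have : (fun j => (lam j / t + 1 / t ^ 2) * Real.exp (-t * lam j))
          = fun j => lam j * Real.exp (-t * lam j) / t + 1 / t ^ 2 * Real.exp (-t * lam j) := by
        funext j; ring
      rw [this, Summable.tsum_add hs1 hs2, tsum_mul_left, tsum_div_const]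
      ring
    · refine Summable.congr ?_ (fun j => (htda_int1 ht (hlam j).le).symm)
      refine ((hA.div_const t).add (hB.mul_left (1 / t ^ 2))).congr fun j => by ring
  rw [hI0, hI1]
  field_simp
  ring

open Filter in
/-- Lemma 9 d) of the paper in abstract form: if `E^{−l} N(E) → c`, then
`t^{l+1} ∑_j λ_j e^{−tλ_j} → c l Γ(l+1)` as `t → 0⁺`. -/
theorem heat_trace_derivative_asymptotics
    (lam : ℕ → ℝ) (hlam : ∀ j, 0 < lam j)
    (hsum : ∀ t : ℝ, 0 < t → Summable fun j => Real.exp (-t * lam j))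
    (l c : ℝ) (hl : 0 < l) (hc : 0 ≤ c)
    (hN : Tendsto (fun E : ℝ => E ^ (-l) * (Nat.card {j : ℕ | lam j ≤ E} : ℝ))
      atTop (nhds c)) :
    Tendsto (fun t : ℝ => t ^ (l + 1) * ∑' j, lam j * Real.exp (-t * lam j))
      (nhdsWithin 0 (Set.Ioi 0)) (nhds (c * l * Real.Gamma (l + 1))) := by
  have hN' : Tendsto (fun E : ℝ => E ^ (-l) * htdaN lam E) atTop (nhds c) := hN
  have h1 := htda_limit hl hc hlam hsum hN' 1 zero_le_one
  have h0 := htda_limit hl hc hlam hsum hN' 0 le_rfl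
  have e1 : ∀ t : ℝ, (∫ E in Ioi 0, htdaN lam E * (E ^ (1:ℝ) * Real.exp (-t * E)))
      = ∫ E in Ioi 0, htdaN lam E * (E * Real.exp (-t * E)) := fun t =>
    setIntegral_congr_fun measurableSet_Ioi fun x hx => by rw [Real.rpow_one]
  have e0 : ∀ t : ℝ, (∫ E in Ioi 0, htdaN lam E * (E ^ (0:ℝ) * Real.exp (-t * E)))
      = ∫ E in Ioi 0, htdaN lam E * Real.exp (-t * E) := fun t =>
    setIntegral_congr_fun measurableSet_Ioi fun x hx => by rw [Real.rpow_zero, one_mul]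
  have h1' : Tendsto (fun t : ℝ => t ^ (l + 1 + 1)
      * ∫ E in Ioi 0, htdaN lam E * (E * Real.exp (-t * E)))
      (nhdsWithin 0 (Set.Ioi 0)) (nhds (c * Real.Gamma (l + 1 + 1))) := by
    refine Tendsto.congr (fun t => by rw [e1 t]) h1
  have h0' : Tendsto (fun t : ℝ => t ^ (l + 1)
      * ∫ E in Ioi 0, htdaN lam E * Real.exp (-t * E))
      (nhdsWithin 0 (Set.Ioi 0)) (nhds (c * Real.Gamma (l + 1))) := by
    have h := Tendsto.congr (fun t => by rw [e0 t]) h0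
    simpa using h
  have hsub := h1'.sub h0'
  have hval : c * Real.Gamma (l + 1 + 1) - c * Real.Gamma (l + 1)
      = c * l * Real.Gamma (l + 1) := by
    rw [Real.Gamma_add_one (show l + 1 ≠ 0 by linarith)]
    ring
  rw [hval] at hsub
  refine Tendsto.congr' ?_ hsub
  filter_upwards [self_mem_nhdsWithin] with t ht
  rw [htda_identity hlam hsum (show (0:ℝ) < t from ht), Real.rpow_add (show (0:ℝ) < t from ht),
    Real.rpow_one]
  ring
end
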